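/- Let s̃ ∈ (1/3, 1/√3) and p₋ > 0. Define p₊ = p₋ (9s̃² − 1)/(3(1 − s̃²)), v₊ = (3/2)s̃ − 1/(2s̃), v₋ = 0, u_± = v_±/√(1 − v_±²), and (a_±, b_±) = Θ(p_±, u_±). Then the Rankine–Hugoniot conditions for a 3-shock with speed s̃ hold: s̃ (a₊ − a₋) = b₊ − b₋ and s̃ (b₊ − b₋) = c(a₊,b₊) − c(a₋,b₋), where c(a,b) = (5/3)a − (2/3)√(4a² − 3b²). -/

import Mathlib

open Real

/-- The one-dimensional state transformation `Θ(p,u) = (p(3+4u²), 4pu√(1+u²))`. -/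
noncomputable def theta (p u : ℝ) : ℝ × ℝ :=
  (p * (3 + 4 * u ^ 2), 4 * p * u * Real.sqrt (1 + u ^ 2))

/-- The flux function `c(a,b) = (5/3)a − (2/3)√(4a² − 3b²)` of the radially
symmetric system. -/
noncomputable def cFlux (a b : ℝ) : ℝ :=
  (5 / 3) * a - (2 / 3) * Real.sqrt (4 * a ^ 2 - 3 * b ^ 2)

set_option maxHeartbeats 1600000 in
/-- The Rankine–Hugoniot conditions for the 3-shock with speed `s̃ ∈ (1/3, 1/√3)`:
with `p₊ = p₋ (9s̃²−1)/(3(1−s̃²))`, `v₊ = (3/2)s̃ − 1/(2s̃)`, `v₋ = 0`,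
`u_± = v_±/√(1−v_±²)` and `(a_±,b_±) = Θ(p_±,u_±)`, one has
`s̃(a₊−a₋) = b₊−b₋` and `s̃(b₊−b₋) = c(a₊,b₊) − c(a₋,b₋)`. -/
theorem rankine_hugoniot_three_shock (s pm : ℝ)
    (hs1 : 1 / 3 < s) (hs2 : s < 1 / Real.sqrt 3) (hpm : 0 < pm)
    (pp vp vm up um ap bp am bm : ℝ)
    (hpp : pp = pm * (9 * s ^ 2 - 1) / (3 * (1 - s ^ 2)))
    (hvp : vp = (3 / 2) * s - 1 / (2 * s))
    (hvm : vm = 0)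
    (hup : up = vp / Real.sqrt (1 - vp ^ 2))
    (hum : um = vm / Real.sqrt (1 - vm ^ 2))
    (habp : (ap, bp) = theta pp up)
    (habm : (am, bm) = theta pm um) :
    s * (ap - am) = bp - bm ∧
      s * (bp - bm) = cFlux ap bp - cFlux am bm := by
  have hs0 : 0 < s := lt_trans (by norm_num) hs1
  have h3 : (Real.sqrt 3) ^ 2 = 3 := Real.sq_sqrt (by norm_num)
  have h3p : (0:ℝ) < Real.sqrt 3 := Real.sqrt_pos.mpr (by norm_num)
  have hs2' : s * Real.sqrt 3 < 1 := by
    rw [lt_div_iff₀ h3p] at hs2; exact hs2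
  have hss : 3 * s ^ 2 < 1 := by nlinarith [Real.sqrt_nonneg 3]
  have hs9 : 1 < 9 * s ^ 2 := by nlinarith
  set d : ℝ := (1 - s ^ 2) * (9 * s ^ 2 - 1) with hd_def
  have hd : 0 < d := by
    apply mul_pos <;> nlinarith
  have hsd : Real.sqrt d > 0 := Real.sqrt_pos.mpr hd
  have hdd : Real.sqrt d * Real.sqrt d = d := Real.mul_self_sqrt hd.le
  have hppos : 0 < pp := by
    rw [hpp]
    apply div_pos (by nlinarith) (by nlinarith)
  have h1ne' : (1 - s ^ 2) ≠ 0 := by nlinarith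
  have h2ne' : (9 * s ^ 2 - 1) ≠ 0 := by nlinarith
  have h2ne3 : (s ^ 2 * 9 - 1) ≠ 0 := by nlinarith
  -- minus side
  have hum0 : um = 0 := by simp [hum, hvm]
  have ham : am = 3 * pm := by
    have := habm
    rw [theta, hum0, Prod.mk.injEq] at this
    rw [this.1]; ring
  have hbm : bm = 0 := by
    have := habm
    rw [theta, hum0, Prod.mk.injEq] at this
    rw [this.2]; ring
  -- plus side
  have hvp2 : 1 - vp ^ 2 = d / (4 * s ^ 2) := by
    rw [hvp, hd_def]; field_simp; ring
  have hsq1 : Real.sqrt (1 - vp ^ 2) = Real.sqrt d / (2 * s) := by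
    rw [hvp2, show d / (4 * s ^ 2) = (Real.sqrt d / (2 * s)) ^ 2 by
      rw [div_pow, Real.sq_sqrt hd.le]; ring,
      Real.sqrt_sq (by positivity)]
  have hup' : up = (3 * s ^ 2 - 1) / Real.sqrt d := by
    rw [hup, hsq1, hvp]
    field_simp
  have hup2 : up ^ 2 = (3 * s ^ 2 - 1) ^ 2 / d := by
    rw [hup', div_pow, Real.sq_sqrt hd.le]
  have h1up2 : 1 + up ^ 2 = 4 * s ^ 2 / d := by
    rw [hup2, hd_def]; field_simp; ring
  have hsq2 : Real.sqrt (1 + up ^ 2) = 2 * s / Real.sqrt d := by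
    rw [h1up2, show 4 * s ^ 2 / d = (2 * s / Real.sqrt d) ^ 2 by
      rw [div_pow, Real.sq_sqrt hd.le]; ring,
      Real.sqrt_sq (by positivity)]
  have hap : ap = pp * (3 * s ^ 2 + 1) ^ 2 / d := by
    have := habp
    rw [theta, Prod.mk.injEq] at this
    rw [this.1, hup2, hd_def]
    field_simp
    ring_nf
  have hbp : bp = 8 * pp * s * (3 * s ^ 2 - 1) / d := by
    have := habp
    rw [theta, Prod.mk.injEq] at this
    rw [this.2, hsq2, hup',
      show 4 * pp * ((3 * s ^ 2 - 1) / Real.sqrt d) * (2 * s / Real.sqrt d)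
          = 8 * pp * s * (3 * s ^ 2 - 1) / (Real.sqrt d * Real.sqrt d) by
        field_simp; ring,
      hdd]
  -- first RH condition
  have h1ne : (1 - s ^ 2) ≠ 0 := by nlinarith
  have h2ne : (9 * s ^ 2 - 1) ≠ 0 := by nlinarith
  have goal1 : s * (ap - am) = bp - bm := by
    rw [hap, hbp, ham, hbm, hpp, hd_def]
    field_simp
    ring
  refine ⟨goal1, ?_⟩
  -- cFlux values
  have hcm : cFlux am bm = pm := by
    rw [cFlux, ham, hbm]
    rw [show 4 * (3 * pm) ^ 2 - 3 * 0 ^ 2 = (6 * pm) ^ 2 by ring,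
      Real.sqrt_sq (by positivity)]
    ring
  have hK : 0 < 4 * (3 * s ^ 2 - 1) ^ 2 + 6 * d := by
    rw [hd_def]; nlinarith
  have hE : 4 * ap ^ 2 - 3 * bp ^ 2 =
      (pp * (4 * (3 * s ^ 2 - 1) ^ 2 + 6 * d) / d) ^ 2 := by
    rw [hap, hbp, hd_def]
    field_simp
    ring
  have hcp : cFlux ap bp =
      (5 / 3) * ap - (2 / 3) * (pp * (4 * (3 * s ^ 2 - 1) ^ 2 + 6 * d) / d) := by
    rw [cFlux, hE, Real.sqrt_sq (by positivity)]
  rw [hcp, hcm, hap, hbp, hbm, hpp, hd_def]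
  field_simp
  ring
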